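/- Let K be the field of fractions of ℚ[x₀,x₁,x₂,x₃,x₄,x₅], set A = (x₂x₄+x₃x₅)/(x₀x₁), B = (x₁x₄+x₀x₅)/(x₂x₃), C = (x₀x₂+x₁x₃)/(x₄x₅), and let τ'₁, τ'₂, τ'₃ be the maps on K⁶ defined by: τ'₁ replaces (v₀,v₁) by ((v₂v₄+v₃v₅)/v₁, (v₂v₄+v₃v₅)/v₀); τ'₂ replaces (v₂,v₃) by ((v₁v₄+v₀v₅)/v₃, (v₁v₄+v₀v₅)/v₂); τ'₃ replaces (v₄,v₅) by ((v₀v₂+v₁v₃)/v₅, (v₀v₂+v₁v₃)/v₄); each fixes the remaining entries. For natural numbers s, t, let w be the word consisting of the block (1,2,3) repeated 2t+1 times, then the letter (1), then the block (3,2,1) repeated 2s+1 times, and let v be the result of applying the maps to X = (x₀,…,x₅) in left-to-right order along w. Then v₀ = x₀·A^{3s²+3st+3t²+6s+6t+4}·B^{3s²+3st+3t²+7s+5t+4}·C^{3s²+3st+3t²+5s+4t+2} and v₁ = x₁ times the same monomial in A, B, C. -/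

import Mathlib

noncomputable section

/-- The polynomial ring ℚ[x₀,…,x₅]. -/
abbrev P : Type := MvPolynomial (Fin 6) ℚ

/-- K = Frac(ℚ[x₀,…,x₅]). -/
abbrev K : Type := FractionRing P

/-- The images of the variables x₀,…,x₅ in K. -/
def x (i : Fin 6) : K := algebraMap P K (MvPolynomial.X i)

/-- τ'₁ : replaces (v₀, v₁) by ((v₂v₄+v₃v₅)/v₁, (v₂v₄+v₃v₅)/v₀). -/
def tau1 (v : Fin 6 → K) : Fin 6 → K := fun k =>
  if k = 0 then (v 2 * v 4 + v 3 * v 5) / v 1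
  else if k = 1 then (v 2 * v 4 + v 3 * v 5) / v 0
  else v k

/-- τ'₂ : replaces (v₂, v₃) by ((v₁v₄+v₀v₅)/v₃, (v₁v₄+v₀v₅)/v₂). -/
def tau2 (v : Fin 6 → K) : Fin 6 → K := fun k =>
  if k = 2 then (v 1 * v 4 + v 0 * v 5) / v 3
  else if k = 3 then (v 1 * v 4 + v 0 * v 5) / v 2
  else v k

/-- τ'₃ : replaces (v₄, v₅) by ((v₀v₂+v₁v₃)/v₅, (v₀v₂+v₁v₃)/v₄). -/
def tau3 (v : Fin 6 → K) : Fin 6 → K := fun k =>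
  if k = 4 then (v 0 * v 2 + v 1 * v 3) / v 5
  else if k = 5 then (v 0 * v 2 + v 1 * v 3) / v 4
  else v k

/-- τ' indexed by Fin 3: `tau i` is τ'_{i+1}. -/
def tau : Fin 3 → (Fin 6 → K) → (Fin 6 → K)
  | 0 => tau1
  | 1 => tau2
  | 2 => tau3

/-- The initial labeled seed X = (x₀,…,x₅). -/
def X0 : Fin 6 → K := x

/-- Apply the maps τ'₍a₁₎, …, τ'₍aₙ₎ along the word `w` in left-to-right order. -/
def applyWord (w : List (Fin 3)) (v : Fin 6 → K) : Fin 6 → K :=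
  w.foldl (fun u a => tau a u) v

/-- A = (x₂x₄+x₃x₅)/(x₀x₁). -/
def A : K := (x 2 * x 4 + x 3 * x 5) / (x 0 * x 1)

/-- B = (x₁x₄+x₀x₅)/(x₂x₃). -/
def B : K := (x 1 * x 4 + x 0 * x 5) / (x 2 * x 3)

/-- C = (x₀x₂+x₁x₃)/(x₄x₅). -/
def C : K := (x 0 * x 2 + x 1 * x 3) / (x 4 * x 5)

/-- The canonical path (123)^{2t+1} (1) (321)^{2s+1} to the odd alcove with
i = 6s+3, j = 3t+2 (letters 1,2,3 are encoded as 0,1,2 in `Fin 3`). -/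
def word12 (s t : ℕ) : List (Fin 3) :=
  (List.replicate (2 * t + 1) ([0, 1, 2] : List (Fin 3))).flatten ++
    ([0] : List (Fin 3)) ++
    (List.replicate (2 * s + 1) ([2, 1, 0] : List (Fin 3))).flatten

/-! ### Auxiliary machinery -/

/-- Exponent vectors for `(A, B, C)`. -/
abbrev V6 : Type := ℤ × ℤ × ℤ

/-- A paired exponent state: exponents at positions (0,1), (2,3), (4,5). -/
abbrev S6 : Type := V6 × V6 × V6

/-- Exponent-level action of the τ'-maps. -/
def Eact : Fin 3 → S6 → S6
  | 0 => fun e => (((1 : ℤ), (0 : ℤ), (0 : ℤ)) + e.2.1 + e.2.2 - e.1, e.2.1, e.2.2)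
  | 1 => fun e => (e.1, ((0 : ℤ), (1 : ℤ), (0 : ℤ)) + e.1 + e.2.2 - e.2.1, e.2.2)
  | 2 => fun e => (e.1, e.2.1, ((0 : ℤ), (0 : ℤ), (1 : ℤ)) + e.1 + e.2.1 - e.2.2)

/-- The Laurent monomial `A^a B^b C^c`. -/
def mon (p : V6) : K := A ^ p.1 * B ^ p.2.1 * C ^ p.2.2

/-- Exponent vector at each of the six positions. -/
def pr (e : S6) : Fin 6 → V6 := ![e.1, e.1, e.2.1, e.2.1, e.2.2, e.2.2]

/-- Realization of a paired exponent state as a labeled seed. -/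
def realize (e : S6) : Fin 6 → K := fun k => x k * mon (pr e k)

lemma x_ne (i : Fin 6) : x i ≠ 0 := by
  intro h
  exact MvPolynomial.X_ne_zero (R := ℚ) i
    (IsFractionRing.injective P K (h.trans (map_zero _).symm))

lemma num_ne (a b c d : Fin 6) : x a * x b + x c * x d ≠ 0 := by
  have hx : x a * x b + x c * x d
      = algebraMap P K (MvPolynomial.X a * MvPolynomial.X b
        + MvPolynomial.X c * MvPolynomial.X d) := by
    simp [x, map_add, map_mul]
  rw [hx]
  intro h
  have h2 : (MvPolynomial.X a * MvPolynomial.X b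
      + MvPolynomial.X c * MvPolynomial.X d : P) = 0 :=
    IsFractionRing.injective P K (h.trans (map_zero _).symm)
  have h3 := congrArg (MvPolynomial.eval fun _ => (1 : ℚ)) h2
  simp at h3

lemma A_ne : A ≠ 0 :=
  div_ne_zero (num_ne 2 4 3 5) (mul_ne_zero (x_ne 0) (x_ne 1))

lemma B_ne : B ≠ 0 :=
  div_ne_zero (num_ne 1 4 0 5) (mul_ne_zero (x_ne 2) (x_ne 3))

lemma C_ne : C ≠ 0 :=
  div_ne_zero (num_ne 0 2 1 3) (mul_ne_zero (x_ne 4) (x_ne 5))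

lemma hA : x 2 * x 4 + x 3 * x 5 = x 0 * x 1 * A := by
  rw [A, ← mul_div_assoc, mul_div_cancel_left₀ _ (mul_ne_zero (x_ne 0) (x_ne 1))]

lemma hB : x 1 * x 4 + x 0 * x 5 = x 2 * x 3 * B := by
  rw [B, ← mul_div_assoc, mul_div_cancel_left₀ _ (mul_ne_zero (x_ne 2) (x_ne 3))]

lemma hC : x 0 * x 2 + x 1 * x 3 = x 4 * x 5 * C := by
  rw [C, ← mul_div_assoc, mul_div_cancel_left₀ _ (mul_ne_zero (x_ne 4) (x_ne 5))]

lemma mon_ne (p : V6) : mon p ≠ 0 :=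
  mul_ne_zero (mul_ne_zero (zpow_ne_zero _ A_ne) (zpow_ne_zero _ B_ne))
    (zpow_ne_zero _ C_ne)

lemma mon_add (p q : V6) : mon (p + q) = mon p * mon q := by
  simp only [mon, Prod.fst_add, Prod.snd_add,
    zpow_add₀ A_ne, zpow_add₀ B_ne, zpow_add₀ C_ne]
  ring

lemma mon_sub (p q : V6) : mon (p - q) = mon p / mon q := by
  simp only [mon, Prod.fst_sub, Prod.snd_sub,
    zpow_sub₀ A_ne, zpow_sub₀ B_ne, zpow_sub₀ C_ne]
  field_simp

lemma mon_dA : mon ((1 : ℤ), (0 : ℤ), (0 : ℤ)) = A := by simp [mon]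
lemma mon_dB : mon ((0 : ℤ), (1 : ℤ), (0 : ℤ)) = B := by simp [mon]
lemma mon_dC : mon ((0 : ℤ), (0 : ℤ), (1 : ℤ)) = C := by simp [mon]

set_option maxHeartbeats 1000000 in
lemma step (i : Fin 3) (e : S6) : tau i (realize e) = realize (Eact i e) := by
  obtain ⟨p, q, r⟩ := e
  fin_cases i
  · funext k; fin_cases k
    · show (x 2 * mon q * (x 4 * mon r) + x 3 * mon q * (x 5 * mon r)) / (x 1 * mon p)
        = x 0 * mon (((1 : ℤ), (0 : ℤ), (0 : ℤ)) + q + r - p)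
      rw [mon_sub, mon_add, mon_add, mon_dA,
        show x 2 * mon q * (x 4 * mon r) + x 3 * mon q * (x 5 * mon r)
          = (x 2 * x 4 + x 3 * x 5) * (mon q * mon r) by ring, hA]
      field_simp [x_ne, mon_ne]
    · show (x 2 * mon q * (x 4 * mon r) + x 3 * mon q * (x 5 * mon r)) / (x 0 * mon p)
        = x 1 * mon (((1 : ℤ), (0 : ℤ), (0 : ℤ)) + q + r - p)
      rw [mon_sub, mon_add, mon_add, mon_dA,
        show x 2 * mon q * (x 4 * mon r) + x 3 * mon q * (x 5 * mon r)
          = (x 2 * x 4 + x 3 * x 5) * (mon q * mon r) by ring, hA]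
      field_simp [x_ne, mon_ne]
    · rfl
    · rfl
    · rfl
    · rfl
  · funext k; fin_cases k
    · rfl
    · rfl
    · show (x 1 * mon p * (x 4 * mon r) + x 0 * mon p * (x 5 * mon r)) / (x 3 * mon q)
        = x 2 * mon (((0 : ℤ), (1 : ℤ), (0 : ℤ)) + p + r - q)
      rw [mon_sub, mon_add, mon_add, mon_dB,
        show x 1 * mon p * (x 4 * mon r) + x 0 * mon p * (x 5 * mon r)
          = (x 1 * x 4 + x 0 * x 5) * (mon p * mon r) by ring, hB]
      field_simp [x_ne, mon_ne]
    · show (x 1 * mon p * (x 4 * mon r) + x 0 * mon p * (x 5 * mon r)) / (x 2 * mon q)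
        = x 3 * mon (((0 : ℤ), (1 : ℤ), (0 : ℤ)) + p + r - q)
      rw [mon_sub, mon_add, mon_add, mon_dB,
        show x 1 * mon p * (x 4 * mon r) + x 0 * mon p * (x 5 * mon r)
          = (x 1 * x 4 + x 0 * x 5) * (mon p * mon r) by ring, hB]
      field_simp [x_ne, mon_ne]
    · rfl
    · rfl
  · funext k; fin_cases k
    · rfl
    · rfl
    · rfl
    · rfl
    · show (x 0 * mon p * (x 2 * mon q) + x 1 * mon p * (x 3 * mon q)) / (x 5 * mon r)
        = x 4 * mon (((0 : ℤ), (0 : ℤ), (1 : ℤ)) + p + q - r)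
      rw [mon_sub, mon_add, mon_add, mon_dC,
        show x 0 * mon p * (x 2 * mon q) + x 1 * mon p * (x 3 * mon q)
          = (x 0 * x 2 + x 1 * x 3) * (mon p * mon q) by ring, hC]
      field_simp [x_ne, mon_ne]
    · show (x 0 * mon p * (x 2 * mon q) + x 1 * mon p * (x 3 * mon q)) / (x 4 * mon r)
        = x 5 * mon (((0 : ℤ), (0 : ℤ), (1 : ℤ)) + p + q - r)
      rw [mon_sub, mon_add, mon_add, mon_dC,
        show x 0 * mon p * (x 2 * mon q) + x 1 * mon p * (x 3 * mon q)
          = (x 0 * x 2 + x 1 * x 3) * (mon p * mon q) by ring, hC]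
      field_simp [x_ne, mon_ne]

/-- Exponent-level fold. -/
def efold (w : List (Fin 3)) (e : S6) : S6 := w.foldl (fun e a => Eact a e) e

lemma fold_realize (w : List (Fin 3)) : ∀ e : S6,
    applyWord w (realize e) = realize (efold w e) := by
  induction w with
  | nil => intro e; rfl
  | cons a w ih =>
      intro e
      have : applyWord (a :: w) (realize e) = applyWord w (tau a (realize e)) := rfl
      rw [this, step, ih]
      rfl

/-- One `(1 2 3)` block at the exponent level. -/
def Fb (e : S6) : S6 := efold [0, 1, 2] e

/-- One `(3 2 1)` block at the exponent level. -/
def Gb (e : S6) : S6 := efold [2, 1, 0] e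

lemma efold_append (w1 w2 : List (Fin 3)) (e : S6) :
    efold (w1 ++ w2) e = efold w2 (efold w1 e) := by
  simp [efold, List.foldl_append]

lemma efold_flat (b : List (Fin 3)) (n : ℕ) : ∀ e : S6,
    efold (List.replicate n b).flatten e = (efold b)^[n] e := by
  induction n with
  | zero => intro e; rfl
  | succ n ih =>
      intro e
      rw [List.replicate_succ, List.flatten_cons, Function.iterate_succ_apply]
      rw [efold, List.foldl_append, ← efold, ← efold, ih]

/-- The exponent state after `(123)^{2t+1}`. -/
def Pst (t : ℤ) : S6 :=
  ((3*t^2+3*t+1, 3*t^2+2*t, 3*t^2+t),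
   (3*t^2+4*t+1, 3*t^2+3*t+1, 3*t^2+2*t),
   (3*t^2+5*t+2, 3*t^2+4*t+1, 3*t^2+3*t+1))

/-- The exponent state after `(123)^{2t+1} (1)`. -/
def Qst (t : ℤ) : S6 :=
  ((3*t^2+6*t+3, 3*t^2+5*t+2, 3*t^2+4*t+1),
   (3*t^2+4*t+1, 3*t^2+3*t+1, 3*t^2+2*t),
   (3*t^2+5*t+2, 3*t^2+4*t+1, 3*t^2+3*t+1))

/-- The final exponent state. -/
def Rst (s t : ℤ) : S6 :=
  ((3*s^2+3*s*t+3*t^2+6*s+6*t+4, 3*s^2+3*s*t+3*t^2+7*s+5*t+4,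
      3*s^2+3*s*t+3*t^2+5*s+4*t+2),
   (3*s^2+3*s*t+3*t^2+5*s+7*t+4, 3*s^2+3*s*t+3*t^2+6*s+6*t+4,
      3*s^2+3*s*t+3*t^2+4*s+5*t+2),
   (3*s^2+3*s*t+3*t^2+4*s+5*t+2, 3*s^2+3*s*t+3*t^2+5*s+4*t+2,
      3*s^2+3*s*t+3*t^2+3*s+3*t+1))

lemma LP (t : ℕ) : (Fb)^[2 * t + 1] (0 : S6) = Pst t := by
  induction t with
  | zero =>
      show Fb 0 = Pst 0
      simp only [Fb, efold, List.foldl, Eact, Pst, Prod.ext_iff]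
      norm_num
  | succ t ih =>
      rw [show 2 * (t + 1) + 1 = 2 + (2 * t + 1) by ring,
        Function.iterate_add_apply, ih]
      show Fb (Fb (Pst t)) = Pst (t + 1)
      simp only [Fb, efold, List.foldl, Eact, Pst, Prod.ext_iff,
        Prod.fst_add, Prod.snd_add, Prod.fst_sub, Prod.snd_sub]
      first
      | trivial
      | (push_cast; and_intros <;> ring)
      | (and_intros <;> push_cast <;> ring)

lemma LQ (t : ℕ) : Eact 0 (Pst t) = Qst t := by
  simp only [Eact, Pst, Qst, Prod.ext_iff, Prod.fst_add, Prod.snd_add,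
    Prod.fst_sub, Prod.snd_sub]
  first
  | trivial
  | (push_cast; and_intros <;> ring)
  | (and_intros <;> push_cast <;> ring)

lemma LR (t : ℕ) : ∀ s : ℕ, (Gb)^[2 * s + 1] (Qst t) = Rst s t := by
  intro s
  induction s with
  | zero =>
      show Gb (Qst t) = Rst 0 t
      simp only [Gb, efold, List.foldl, Eact, Qst, Rst, Prod.ext_iff,
        Prod.fst_add, Prod.snd_add, Prod.fst_sub, Prod.snd_sub]
      first
      | trivial
      | (push_cast; and_intros <;> ring)
      | (and_intros <;> push_cast <;> ring)
  | succ s ih =>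
      rw [show 2 * (s + 1) + 1 = 2 + (2 * s + 1) by ring,
        Function.iterate_add_apply, ih]
      show Gb (Gb (Rst s t)) = Rst (s + 1) t
      simp only [Gb, efold, List.foldl, Eact, Rst, Prod.ext_iff,
        Prod.fst_add, Prod.snd_add, Prod.fst_sub, Prod.snd_sub]
      first
      | trivial
      | (push_cast; and_intros <;> ring)
      | (and_intros <;> push_cast <;> ring)

lemma Lexp (s t : ℕ) : efold (word12 s t) 0 = Rst s t := by
  have e1 : efold (List.replicate (2 * t + 1) ([0, 1, 2] : List (Fin 3))).flatten 0 = Pst t := by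
    rw [efold_flat]; exact LP t
  have e2 : efold ([0] : List (Fin 3)) (Pst t) = Qst t := LQ t
  have e3 : efold (List.replicate (2 * s + 1) ([2, 1, 0] : List (Fin 3))).flatten (Qst t)
      = Rst s t := by
    rw [efold_flat]; exact LR t s
  unfold word12
  rw [efold_append, efold_append, e1, e2, e3]

lemma mon_zero : mon 0 = 1 := by
  show A ^ (0 : ℤ) * B ^ (0 : ℤ) * C ^ (0 : ℤ) = 1
  simp

lemma realize_zero : realize 0 = X0 := by
  funext k
  fin_cases k <;> (show x _ * mon 0 = x _; rw [mon_zero, mul_one])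

/-- Theorem 2.1, odd-alcove case |i| ≡ 3 mod 6, |j| ≡ 2 mod 3, i = 6s+3, j = 3t+2:
the vertex-0 and vertex-1 cluster variables at the corresponding odd alcove. -/
theorem alcove_odd_32 (s t : ℕ) :
    applyWord (word12 s t) X0 0 =
      x 0 * A ^ (3 * (s : ℤ) ^ 2 + 3 * s * t + 3 * t ^ 2 + 6 * s + 6 * t + 4)
          * B ^ (3 * (s : ℤ) ^ 2 + 3 * s * t + 3 * t ^ 2 + 7 * s + 5 * t + 4)
          * C ^ (3 * (s : ℤ) ^ 2 + 3 * s * t + 3 * t ^ 2 + 5 * s + 4 * t + 2) ∧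
    applyWord (word12 s t) X0 1 =
      x 1 * A ^ (3 * (s : ℤ) ^ 2 + 3 * s * t + 3 * t ^ 2 + 6 * s + 6 * t + 4)
          * B ^ (3 * (s : ℤ) ^ 2 + 3 * s * t + 3 * t ^ 2 + 7 * s + 5 * t + 4)
          * C ^ (3 * (s : ℤ) ^ 2 + 3 * s * t + 3 * t ^ 2 + 5 * s + 4 * t + 2) := by
  have h : applyWord (word12 s t) X0 = realize (Rst s t) := by
    rw [← realize_zero, fold_realize, Lexp]
  constructor
  · rw [h]
    show x 0 * (A ^ (3 * (s : ℤ) ^ 2 + 3 * s * t + 3 * t ^ 2 + 6 * s + 6 * t + 4)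
        * B ^ (3 * (s : ℤ) ^ 2 + 3 * s * t + 3 * t ^ 2 + 7 * s + 5 * t + 4)
        * C ^ (3 * (s : ℤ) ^ 2 + 3 * s * t + 3 * t ^ 2 + 5 * s + 4 * t + 2)) = _
    rw [← mul_assoc, ← mul_assoc]
  · rw [h]
    show x 1 * (A ^ (3 * (s : ℤ) ^ 2 + 3 * s * t + 3 * t ^ 2 + 6 * s + 6 * t + 4)
        * B ^ (3 * (s : ℤ) ^ 2 + 3 * s * t + 3 * t ^ 2 + 7 * s + 5 * t + 4)
        * C ^ (3 * (s : ℤ) ^ 2 + 3 * s * t + 3 * t ^ 2 + 5 * s + 4 * t + 2)) = _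
    rw [← mul_assoc, ← mul_assoc]
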